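/- (Abstract form of Theorem 1's frequency/duration argument.) Under the switching setup, let λ_a, λ_b > 0, μ > 1, and let V_a, V_b : ℝ → ℝ be nonnegative functions satisfying: (i) V_a(s) ≤ μ V_b(s) and V_b(s) ≤ μ V_a(s) for all s ≥ t₀; (ii) for every k and all τ_{2k} ≤ s ≤ u ≤ τ_{2k+1}: V_a(u) ≤ e^{−λ_a(u−s)} V_a(s); (iii) for every k and all τ_{2k+1} ≤ s ≤ u ≤ τ_{2k+2}: V_b(u) ≤ e^{λ_b(u−s)} V_b(s). Assume the attack-frequency condition: there exist η* ∈ (0, λ_a), N₀ > 0 and T_f ≥ 2 ln(μ)/η* with N_a(t₀,t) ≤ N₀ + (t − t₀)/T_f for all t ≥ t₀; and the attack-duration condition: there exist T₀ ≥ 0 and T_a > (λ_a + λ_b)/(λ_a − η*) with |Ξ_a(t₀,t)| ≤ T₀ + (t − t₀)/T_a for all t ≥ t₀. Then η := λ_a − (λ_a + λ_b)/T_a − η* > 0, and the piecewise function V (equal to V_a on attack-free intervals and to V_b on attack intervals) satisfies V(t) ≤ e^{(λ_a+λ_b)T₀ + 2 N₀ ln μ} · e^{−η (t − t₀)} ·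 V(t₀) for all t ≥ t₀. -/
import Mathlib

open MeasureTheory

private lemma switching_key_aux (t₀ : ℝ) (τ : ℕ → ℝ) (hτ0 : τ 0 = t₀) (hτmono : StrictMono τ)
    (lamA lamB : ℝ) (μ : ℝ) (hμ0 : 0 < μ)
    (Va Vb : ℝ → ℝ) (hVa0 : ∀ s, 0 ≤ Va s) (hVb0 : ∀ s, 0 ≤ Vb s)
    (hab : ∀ s, t₀ ≤ s → Va s ≤ μ * Vb s)
    (hba : ∀ s, t₀ ≤ s → Vb s ≤ μ * Va s)
    (hdec : ∀ k : ℕ, ∀ s u : ℝ, τ (2 * k) ≤ s → s ≤ u → u ≤ τ (2 * k + 1) →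
      Va u ≤ Real.exp (-lamA * (u - s)) * Va s)
    (hinc : ∀ k : ℕ, ∀ s u : ℝ, τ (2 * k + 1) ≤ s → s ≤ u → u ≤ τ (2 * k + 2) →
      Vb u ≤ Real.exp (lamB * (u - s)) * Vb s) :
    ∀ m : ℕ,
      (∀ u, τ (2 * m) ≤ u → u ≤ τ (2 * m + 1) →
        Va u ≤ μ ^ (2 * m) *
          Real.exp ((lamA + lamB) * (∑ k ∈ Finset.range m, (τ (2 * k + 2) - τ (2 * k + 1)))
            - lamA * (u - t₀)) * Va t₀)
      ∧ (∀ u, τ (2 * m + 1) ≤ u → u ≤ τ (2 * m + 2) →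
        Vb u ≤ μ ^ (2 * m + 1) *
          Real.exp ((lamA + lamB) * ((∑ k ∈ Finset.range m, (τ (2 * k + 2) - τ (2 * k + 1)))
            + (u - τ (2 * m + 1))) - lamA * (u - t₀)) * Va t₀) := by
  have hτt₀ : ∀ n, t₀ ≤ τ n := fun n => by
    rw [← hτ0]; exact hτmono.monotone (Nat.zero_le n)
  have step1 : ∀ m : ℕ,
      (∀ u, τ (2 * m) ≤ u → u ≤ τ (2 * m + 1) →
        Va u ≤ μ ^ (2 * m) *
          Real.exp ((lamA + lamB) * (∑ k ∈ Finset.range m, (τ (2 * k + 2) - τ (2 * k + 1)))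
            - lamA * (u - t₀)) * Va t₀) →
      (∀ u, τ (2 * m + 1) ≤ u → u ≤ τ (2 * m + 2) →
        Vb u ≤ μ ^ (2 * m + 1) *
          Real.exp ((lamA + lamB) * ((∑ k ∈ Finset.range m, (τ (2 * k + 2) - τ (2 * k + 1)))
            + (u - τ (2 * m + 1))) - lamA * (u - t₀)) * Va t₀) := by
    intro m ih u h1 h2
    set S : ℝ := ∑ k ∈ Finset.range m, (τ (2 * k + 2) - τ (2 * k + 1)) with hS
    calc Vb u ≤ Real.exp (lamB * (u - τ (2 * m + 1))) * Vb (τ (2 * m + 1)) :=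
          hinc m _ u le_rfl h1 h2
      _ ≤ Real.exp (lamB * (u - τ (2 * m + 1))) * (μ * Va (τ (2 * m + 1))) :=
          mul_le_mul_of_nonneg_left (hba _ (hτt₀ _)) (Real.exp_pos _).le
      _ ≤ Real.exp (lamB * (u - τ (2 * m + 1))) *
          (μ * (μ ^ (2 * m) * Real.exp ((lamA + lamB) * S - lamA * (τ (2 * m + 1) - t₀)) * Va t₀)) := by
          apply mul_le_mul_of_nonneg_left _ (Real.exp_pos _).le
          exact mul_le_mul_of_nonneg_left
            (ih (τ (2 * m + 1)) (hτmono.monotone (by omega)) le_rfl) hμ0.le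
      _ = μ ^ (2 * m + 1) *
          Real.exp ((lamA + lamB) * (S + (u - τ (2 * m + 1))) - lamA * (u - t₀)) * Va t₀ := by
          rw [show (lamA + lamB) * (S + (u - τ (2 * m + 1))) - lamA * (u - t₀)
              = lamB * (u - τ (2 * m + 1)) + ((lamA + lamB) * S - lamA * (τ (2 * m + 1) - t₀))
              from by ring, Real.exp_add]
          ring
  intro m
  induction m with
  | zero =>
    have p1 : ∀ u, τ (2 * 0) ≤ u → u ≤ τ (2 * 0 + 1) →
        Va u ≤ μ ^ (2 * 0) *
          Real.exp ((lamA + lamB) * (∑ k ∈ Finset.range 0, (τ (2 * k + 2) - τ (2 * k + 1)))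
            - lamA * (u - t₀)) * Va t₀ := by
      intro u h1 h2
      have ht₀u : t₀ ≤ u := by
        rw [← hτ0]; simpa using h1
      have hd := hdec 0 t₀ u (by simp [hτ0]) ht₀u h2
      calc Va u ≤ Real.exp (-lamA * (u - t₀)) * Va t₀ := hd
        _ = μ ^ (2 * 0) *
          Real.exp ((lamA + lamB) * (∑ k ∈ Finset.range 0, (τ (2 * k + 2) - τ (2 * k + 1)))
            - lamA * (u - t₀)) * Va t₀ := by
          norm_num
    exact ⟨p1, step1 0 p1⟩
  | succ m ih =>
    have p1 : ∀ u, τ (2 * (m + 1)) ≤ u → u ≤ τ (2 * (m + 1) + 1) →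
        Va u ≤ μ ^ (2 * (m + 1)) *
          Real.exp ((lamA + lamB) * (∑ k ∈ Finset.range (m + 1), (τ (2 * k + 2) - τ (2 * k + 1)))
            - lamA * (u - t₀)) * Va t₀ := by
      intro u h1 h2
      set S : ℝ := ∑ k ∈ Finset.range m, (τ (2 * k + 2) - τ (2 * k + 1)) with hS
      have hsum : ∑ k ∈ Finset.range (m + 1), (τ (2 * k + 2) - τ (2 * k + 1))
          = S + (τ (2 * m + 2) - τ (2 * m + 1)) := Finset.sum_range_succ _ _
      have hidx : 2 * (m + 1) = 2 * m + 2 := by ring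
      rw [hidx] at h1 ⊢
      have hidx2 : 2 * (m + 1) + 1 = 2 * m + 3 := by omega
      rw [hidx2] at h2
      have hd := hdec (m + 1) (τ (2 * m + 2)) u (by rw [hidx]) h1 (by
        rw [show 2 * (m + 1) + 1 = 2 * m + 3 by omega]; exact h2)
      rw [hsum]
      have hb2 := ih.2 (τ (2 * m + 2)) (hτmono.monotone (by omega)) le_rfl
      calc Va u ≤ Real.exp (-lamA * (u - τ (2 * m + 2))) * Va (τ (2 * m + 2)) := hd
        _ ≤ Real.exp (-lamA * (u - τ (2 * m + 2))) * (μ * Vb (τ (2 * m + 2))) :=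
            mul_le_mul_of_nonneg_left (hab _ (hτt₀ _)) (Real.exp_pos _).le
        _ ≤ Real.exp (-lamA * (u - τ (2 * m + 2))) *
            (μ * (μ ^ (2 * m + 1) *
              Real.exp ((lamA + lamB) * (S + (τ (2 * m + 2) - τ (2 * m + 1)))
                - lamA * (τ (2 * m + 2) - t₀)) * Va t₀)) := by
            apply mul_le_mul_of_nonneg_left _ (Real.exp_pos _).le
            exact mul_le_mul_of_nonneg_left hb2 hμ0.le
        _ = μ ^ (2 * m + 2) *
            Real.exp ((lamA + lamB) * (S + (τ (2 * m + 2) - τ (2 * m + 1)))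
              - lamA * (u - t₀)) * Va t₀ := by
            rw [show (lamA + lamB) * (S + (τ (2 * m + 2) - τ (2 * m + 1))) - lamA * (u - t₀)
                = -lamA * (u - τ (2 * m + 2)) +
                  ((lamA + lamB) * (S + (τ (2 * m + 2) - τ (2 * m + 1)))
                    - lamA * (τ (2 * m + 2) - t₀)) from by ring, Real.exp_add]
            ring
    exact ⟨p1, step1 (m + 1) p1⟩



/-- **abstract frequency/duration argument of Theorem 1.**
Under the switching setup with comparable Lyapunov functions `V_a, V_b`
(decay rate `λ_a` off attacks, growth rate `λ_b` under attacks), if the attack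
frequency satisfies `N_a(t₀,t) ≤ N₀ + (t−t₀)/T_f` with `T_f ≥ 2 ln μ / η*` for some
`η* ∈ (0, λ_a)`, and the attack duration satisfies `|Ξ_a(t₀,t)| ≤ T₀ + (t−t₀)/T_a`
with `T_a > (λ_a+λ_b)/(λ_a−η*)`, then `η := λ_a − (λ_a+λ_b)/T_a − η* > 0` and the
piecewise Lyapunov function `V` satisfies
`V(t) ≤ e^{(λ_a+λ_b)T₀ + 2N₀ ln μ} e^{−η(t−t₀)} V(t₀)` for all `t ≥ t₀`. -/
theorem switching_bound_frequency_duration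
    (t₀ : ℝ) (τ : ℕ → ℝ) (hτ0 : τ 0 = t₀) (hτmono : StrictMono τ)
    (hτtop : Filter.Tendsto τ Filter.atTop Filter.atTop)
    (lamA lamB : ℝ) (hlamA : 0 < lamA) (hlamB : 0 < lamB)
    (μ : ℝ) (hμ : 1 < μ)
    (Va Vb : ℝ → ℝ) (hVa0 : ∀ s, 0 ≤ Va s) (hVb0 : ∀ s, 0 ≤ Vb s)
    (hab : ∀ s, t₀ ≤ s → Va s ≤ μ * Vb s)
    (hba : ∀ s, t₀ ≤ s → Vb s ≤ μ * Va s)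
    (hdec : ∀ k : ℕ, ∀ s u : ℝ, τ (2 * k) ≤ s → s ≤ u → u ≤ τ (2 * k + 1) →
      Va u ≤ Real.exp (-lamA * (u - s)) * Va s)
    (hinc : ∀ k : ℕ, ∀ s u : ℝ, τ (2 * k + 1) ≤ s → s ≤ u → u ≤ τ (2 * k + 2) →
      Vb u ≤ Real.exp (lamB * (u - s)) * Vb s)
    (Na : ℝ → ℕ) (hNa : ∀ t, Na t = Set.ncard {k : ℕ | τ (2 * k + 1) ≤ t})
    (Ξa : ℝ → ℝ)
    (hΞa : ∀ t, Ξa t =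
      (volume ((⋃ k : ℕ, Set.Ico (τ (2 * k + 1)) (τ (2 * k + 2))) ∩ Set.Icc t₀ t)).toReal)
    (ηs : ℝ) (hηs0 : 0 < ηs) (hηsA : ηs < lamA)
    (N₀ Tf : ℝ) (hN₀ : 0 < N₀) (hTf : 2 * Real.log μ / ηs ≤ Tf)
    (hfreq : ∀ t, t₀ ≤ t → (Na t : ℝ) ≤ N₀ + (t - t₀) / Tf)
    (T₀ Ta : ℝ) (hT₀ : 0 ≤ T₀) (hTa : (lamA + lamB) / (lamA - ηs) < Ta)
    (hdur : ∀ t, t₀ ≤ t → Ξa t ≤ T₀ + (t - t₀) / Ta)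
    (V : ℝ → ℝ)
    (hVattack : ∀ t, (∃ k : ℕ, τ (2 * k + 1) ≤ t ∧ t < τ (2 * k + 2)) → V t = Vb t)
    (hVfree : ∀ t, (¬ ∃ k : ℕ, τ (2 * k + 1) ≤ t ∧ t < τ (2 * k + 2)) → V t = Va t) :
    0 < lamA - (lamA + lamB) / Ta - ηs ∧
    ∀ t, t₀ ≤ t →
      V t ≤ Real.exp ((lamA + lamB) * T₀ + 2 * N₀ * Real.log μ) *
        Real.exp (-(lamA - (lamA + lamB) / Ta - ηs) * (t - t₀)) * V t₀ := by
  have hμ0 : (0:ℝ) < μ := lt_trans one_pos hμ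
  have hlogμ : 0 < Real.log μ := Real.log_pos hμ
  have hτt₀ : ∀ n, t₀ ≤ τ n := fun n => by
    rw [← hτ0]; exact hτmono.monotone (Nat.zero_le n)
  have hlamsum : (0:ℝ) < lamA + lamB := by linarith
  have hden : (0:ℝ) < lamA - ηs := by linarith
  have hTa0 : (0:ℝ) < Ta := lt_trans (div_pos hlamsum hden) hTa
  have hdiv : (lamA + lamB) / Ta < lamA - ηs := by
    rw [div_lt_iff₀ hTa0]
    have h1 : lamA + lamB < Ta * (lamA - ηs) := (div_lt_iff₀ hden).mp hTa
    linarith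
  have hηpos : 0 < lamA - (lamA + lamB) / Ta - ηs := by linarith
  have hTf0 : (0:ℝ) < Tf := lt_of_lt_of_le (div_pos (by linarith) hηs0) hTf
  have hTfηs : 2 * Real.log μ / Tf ≤ ηs := by
    rw [div_le_iff₀ hTf0]
    have := (div_le_iff₀ hηs0).mp hTf
    linarith
  refine ⟨hηpos, fun t ht => ?_⟩
  -- V t₀ = Va t₀
  have hVt₀ : V t₀ = Va t₀ := by
    apply hVfree
    rintro ⟨k, hk1, _⟩
    have : τ 0 < τ (2 * k + 1) := hτmono (by omega)
    rw [hτ0] at this; linarith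
  -- locate t in an interval
  have hexN : ∃ N, t < τ N := (hτtop.eventually_gt_atTop t).exists
  have hex : ∃ n, t < τ (n + 1) := by
    obtain ⟨N, hN⟩ := hexN
    cases N with
    | zero => rw [hτ0] at hN; linarith
    | succ n => exact ⟨n, hN⟩
  set n := Nat.find hex with hn_def
  have hn1 : t < τ (n + 1) := Nat.find_spec hex
  have hn0 : τ n ≤ t := by
    cases hn : n with
    | zero => rw [hτ0]; exact ht
    | succ k =>
      by_contra hc
      push_neg at hc
      have hkn : k < n := by omega
      exact absurd (Nat.find_min hex hkn : ¬ t < τ (k + 1)) (by simpa using hc)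
  -- Na lower bound
  have hNage : ∀ M : ℕ, (∀ k, k < M → τ (2 * k + 1) ≤ t) → (M : ℝ) ≤ (Na t : ℝ) := by
    intro M hM
    obtain ⟨N, hN⟩ := hexN
    have hfin : {k : ℕ | τ (2 * k + 1) ≤ t}.Finite := by
      apply Set.Finite.subset (Set.finite_Iio N)
      intro k hk
      by_contra hc
      simp only [Set.mem_Iio, not_lt] at hc
      have : τ N ≤ τ (2 * k + 1) := hτmono.monotone (by omega)
      have : t < τ (2 * k + 1) := lt_of_lt_of_le hN this
      exact absurd hk (not_le.mpr this)
    have hsub : (↑(Finset.range M) : Set ℕ) ⊆ {k : ℕ | τ (2 * k + 1) ≤ t} := by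
      intro k hk
      simp only [Finset.coe_range, Set.mem_Iio] at hk
      exact hM k hk
    have := Set.ncard_le_ncard hsub hfin
    rw [Set.ncard_coe_finset, Finset.card_range] at this
    rw [hNa]
    exact_mod_cast this
  -- measure lower bound
  have hmeas : ∀ (M : ℕ) (b : ℕ → ℝ),
      (∀ k, k < M → τ (2 * k + 1) ≤ b k) → (∀ k, k < M → b k ≤ τ (2 * k + 2)) →
      (∀ k, k < M → b k ≤ t) →
      (∑ k ∈ Finset.range M, (b k - τ (2 * k + 1))) ≤ Ξa t := by
    intro M b hb1 hb2 hb3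
    rw [hΞa]
    set U := (⋃ k : ℕ, Set.Ico (τ (2 * k + 1)) (τ (2 * k + 2))) ∩ Set.Icc t₀ t with hU
    have hsub : ∀ k ∈ Finset.range M, Set.Ico (τ (2 * k + 1)) (b k) ⊆ U := by
      intro k hk x hx
      rw [Finset.mem_range] at hk
      constructor
      · exact Set.mem_iUnion.mpr ⟨k, hx.1, lt_of_lt_of_le hx.2 (hb2 k hk)⟩
      · exact ⟨le_trans (hτt₀ _) hx.1, le_trans hx.2.le (hb3 k hk)⟩
    have hdisj : (↑(Finset.range M) : Set ℕ).Pairwise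
        (Function.onFun Disjoint fun k => Set.Ico (τ (2 * k + 1)) (b k)) := by
      have haux : ∀ j k, j < k → k < M →
          Disjoint (Set.Ico (τ (2 * j + 1)) (b j)) (Set.Ico (τ (2 * k + 1)) (b k)) := by
        intro j k hjk hkM
        apply Set.disjoint_left.mpr
        intro x hx hx'
        have h1 : b j ≤ τ (2 * k + 1) :=
          le_trans (hb2 j (hjk.trans hkM)) (hτmono.monotone (by omega))
        exact absurd hx'.1 (not_le.mpr (lt_of_lt_of_le hx.2 h1))
      intro j hj k hk hne
      simp only [Finset.coe_range, Set.mem_Iio] at hj hk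
      rcases hne.lt_or_gt with h | h
      · exact haux j k h hk
      · exact (haux k j h hj).symm
    have hsum : ∑ k ∈ Finset.range M, volume (Set.Ico (τ (2 * k + 1)) (b k))
        = volume (⋃ k ∈ Finset.range M, Set.Ico (τ (2 * k + 1)) (b k)) :=
      (measure_biUnion_finset hdisj (fun _ _ => measurableSet_Ico)).symm
    have hle : volume (⋃ k ∈ Finset.range M, Set.Ico (τ (2 * k + 1)) (b k)) ≤ volume U :=
      measure_mono (Set.iUnion₂_subset hsub)
    have hUfin : volume U ≠ ⊤ := by
      have : volume U ≤ volume (Set.Icc t₀ t) := measure_mono Set.inter_subset_right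
      rw [Real.volume_Icc] at this
      exact ne_top_of_le_ne_top ENNReal.ofReal_ne_top this
    have hofReal : ENNReal.ofReal (∑ k ∈ Finset.range M, (b k - τ (2 * k + 1))) ≤ volume U := by
      rw [ENNReal.ofReal_sum_of_nonneg (fun k hk => by
        rw [Finset.mem_range] at hk
        linarith [hb1 k hk])]
      calc ∑ k ∈ Finset.range M, ENNReal.ofReal (b k - τ (2 * k + 1))
          = ∑ k ∈ Finset.range M, volume (Set.Ico (τ (2 * k + 1)) (b k)) := by
            apply Finset.sum_congr rfl
            intro k _
            rw [Real.volume_Ico]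
        _ ≤ volume U := hsum ▸ hle
    calc (∑ k ∈ Finset.range M, (b k - τ (2 * k + 1)))
        = (ENNReal.ofReal (∑ k ∈ Finset.range M, (b k - τ (2 * k + 1)))).toReal := by
          rw [ENNReal.toReal_ofReal]
          apply Finset.sum_nonneg
          intro k hk
          rw [Finset.mem_range] at hk
          linarith [hb1 k hk]
      _ ≤ (volume U).toReal := ENNReal.toReal_mono hUfin hofReal
  -- the per-interval bound, then the common finishing argument
  have finish : ∀ (N : ℕ) (A : ℝ),
      V t ≤ μ ^ N * Real.exp ((lamA + lamB) * A - lamA * (t - t₀)) * Va t₀ →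
      (N : ℝ) ≤ 2 * (Na t : ℝ) → A ≤ Ξa t →
      V t ≤ Real.exp ((lamA + lamB) * T₀ + 2 * N₀ * Real.log μ) *
        Real.exp (-(lamA - (lamA + lamB) / Ta - ηs) * (t - t₀)) * V t₀ := by
    intro N A hbd hN2 hAΞ
    have hd : (0:ℝ) ≤ t - t₀ := by linarith
    have hA_le : A ≤ T₀ + (t - t₀) / Ta := le_trans hAΞ (hdur t ht)
    have hNa_le : (Na t : ℝ) ≤ N₀ + (t - t₀) / Tf := hfreq t ht
    have hexp : (N : ℝ) * Real.log μ + ((lamA + lamB) * A - lamA * (t - t₀))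
        ≤ ((lamA + lamB) * T₀ + 2 * N₀ * Real.log μ)
          + (-(lamA - (lamA + lamB) / Ta - ηs) * (t - t₀)) := by
      have e1 : (N : ℝ) * Real.log μ ≤ 2 * (Na t : ℝ) * Real.log μ :=
        mul_le_mul_of_nonneg_right hN2 hlogμ.le
      have e2 : 2 * (Na t : ℝ) * Real.log μ
          ≤ 2 * N₀ * Real.log μ + ηs * (t - t₀) := by
        have e2a : 2 * (Na t : ℝ) * Real.log μ
            ≤ 2 * (N₀ + (t - t₀) / Tf) * Real.log μ :=
          mul_le_mul_of_nonneg_right (by linarith) hlogμ.le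
        have e2b : 2 * ((t - t₀) / Tf) * Real.log μ ≤ ηs * (t - t₀) := by
          have := mul_le_mul_of_nonneg_right hTfηs hd
          calc 2 * ((t - t₀) / Tf) * Real.log μ
              = (2 * Real.log μ / Tf) * (t - t₀) := by ring
            _ ≤ ηs * (t - t₀) := this
        nlinarith
      have e3 : (lamA + lamB) * A
          ≤ (lamA + lamB) * T₀ + ((lamA + lamB) / Ta) * (t - t₀) := by
        have := mul_le_mul_of_nonneg_left hA_le hlamsum.le
        calc (lamA + lamB) * A ≤ (lamA + lamB) * (T₀ + (t - t₀) / Ta) := this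
          _ = (lamA + lamB) * T₀ + ((lamA + lamB) / Ta) * (t - t₀) := by ring
      linarith
    rw [hVt₀]
    calc V t ≤ μ ^ N * Real.exp ((lamA + lamB) * A - lamA * (t - t₀)) * Va t₀ := hbd
      _ = Real.exp ((N : ℝ) * Real.log μ + ((lamA + lamB) * A - lamA * (t - t₀))) * Va t₀ := by
          rw [Real.exp_add, Real.exp_nat_mul, Real.exp_log hμ0]
      _ ≤ Real.exp (((lamA + lamB) * T₀ + 2 * N₀ * Real.log μ)
            + (-(lamA - (lamA + lamB) / Ta - ηs) * (t - t₀))) * Va t₀ :=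
          mul_le_mul_of_nonneg_right (Real.exp_le_exp.mpr hexp) (hVa0 t₀)
      _ = Real.exp ((lamA + lamB) * T₀ + 2 * N₀ * Real.log μ) *
          Real.exp (-(lamA - (lamA + lamB) / Ta - ηs) * (t - t₀)) * Va t₀ := by
          rw [Real.exp_add]
  have key := switching_key_aux t₀ τ hτ0 hτmono lamA lamB μ hμ0 Va Vb hVa0 hVb0
    hab hba hdec hinc
  rcases Nat.even_or_odd n with ⟨m, hm⟩ | ⟨m, hm⟩
  · -- n = 2m : attack-free interval
    have hn2m : n = 2 * m := by omega
    rw [hn2m] at hn0 hn1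
    have hVt : V t = Va t := by
      apply hVfree
      rintro ⟨j, hj1, hj2⟩
      have h1 : τ (2 * j + 1) < τ (2 * m + 1) := lt_of_le_of_lt hj1 hn1
      have h2 : 2 * j + 1 < 2 * m + 1 := hτmono.lt_iff_lt.mp h1
      have h3 : τ (2 * j + 2) ≤ τ (2 * m) := hτmono.monotone (by omega)
      exact absurd (lt_of_lt_of_le hj2 (le_trans h3 hn0)) (lt_irrefl t)
    have hbd := (key m).1 t hn0 hn1.le
    rw [← hVt] at hbd
    apply finish (2 * m) _ hbd
    · have : (m : ℝ) ≤ (Na t : ℝ) := by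
        apply hNage
        intro k hk
        exact (hτmono (show 2 * k + 1 < 2 * m by omega)).le.trans hn0
      push_cast
      linarith
    · have := hmeas m (fun k => τ (2 * k + 2))
        (fun k hk => (hτmono (by omega)).le) (fun k hk => le_rfl)
        (fun k hk => le_trans (hτmono.monotone (by omega)) hn0)
      exact this
  · -- n = 2m+1 : attack interval
    have hn2m : n = 2 * m + 1 := by omega
    rw [hn2m] at hn0 hn1
    have hVt : V t = Vb t := hVattack t ⟨m, hn0, by exact_mod_cast hn1⟩
    have hbd := (key m).2 t hn0 hn1.le
    rw [← hVt] at hbd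
    apply finish (2 * m + 1) _ hbd
    · have : ((m : ℝ) + 1) ≤ (Na t : ℝ) := by
        have := hNage (m + 1)
          (fun k hk => (hτmono.monotone (show 2 * k + 1 ≤ 2 * m + 1 by omega)).trans hn0)
        push_cast at this ⊢
        linarith
      push_cast
      linarith
    · have hsum : (∑ k ∈ Finset.range m, (τ (2 * k + 2) - τ (2 * k + 1))) + (t - τ (2 * m + 1))
          = ∑ k ∈ Finset.range (m + 1),
            ((fun k => if k = m then t else τ (2 * k + 2)) k - τ (2 * k + 1)) := by
        rw [Finset.sum_range_succ]
        simp only [if_pos rfl]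
        congr 1
        apply Finset.sum_congr rfl
        intro k hk
        rw [Finset.mem_range] at hk
        rw [if_neg (by omega)]
      rw [hsum]
      apply hmeas (m + 1) (fun k => if k = m then t else τ (2 * k + 2))
      · intro k hk
        by_cases h : k = m
        · subst h; simp [hn0]
        · rw [if_neg h]; exact (hτmono (show 2 * k + 1 < 2 * k + 2 by omega)).le
      · intro k hk
        by_cases h : k = m
        · subst h; simp only [if_pos rfl]; exact hn1.le
        · rw [if_neg h]
      · intro k hk
        by_cases h : k = m
        · subst h; simp
        · rw [if_neg h]
          exact (hτmono (show 2 * k + 2 < 2 * m + 1 by omega)).le.trans hn0
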